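/- Let C ⊆ ℝⁿ be a nonempty closed convex set and let F : ℝⁿ → ℝⁿ be continuous, monotone, and paramonotone on C, with SOL(F,C) nonempty and the coerciveness condition holding. Let β : ℕ → ℝ be stepsizes with β_k > 0 for all k, ∑_{k=0}^∞ β_k = ∞ and ∑_{k=0}^∞ β_k² < ∞. Let (K_k)_{k∈ℕ} be nonempty closed convex subsets of ℝⁿ with C ⊆ K_k for every k, such that for every bounded set V ⊆ ℝⁿ there exists μ ∈ [0,1) with dist(P_{K_k}(x), C) ≤ μ·dist(x, C) for every k and every x ∈ V. Given x⁰ ∈ ℝⁿ, define inductively x^{k+1} = P_{K_k}(x^k − (β_k/η_k)F(x^k)), where η_k = max{1, ‖F(x^k)‖}. Then the sequence {x^k} is bounded and every cluster point of {x^k} belongs to SOL(F,C). -/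

import Mathlib

open scoped RealInnerProductSpace
open Metric Filter Topology

section aux

variable {n : ℕ}

/-- Variational characterization of the nearest-point map. -/
lemma proj_inner_le (K : Set (EuclideanSpace ℝ (Fin n))) (hK : Convex ℝ K)
    (x q : EuclideanSpace ℝ (Fin n)) (hq : q ∈ K)
    (hmin : ∀ y ∈ K, ‖x - q‖ ≤ ‖x - y‖) (u : EuclideanSpace ℝ (Fin n)) (hu : u ∈ K) :
    ⟪x - q, u - q⟫ ≤ 0 := by
  have key : ∀ t : ℝ, 0 < t → t ≤ 1 → 2 * ⟪x - q, u - q⟫ ≤ t * ‖u - q‖ ^ 2 := by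
    intro t ht ht1
    have hmem : q + t • (u - q) ∈ K := by
      have h := hK hq hu (by linarith : (0:ℝ) ≤ 1 - t) ht.le (by ring)
      have : (1 - t) • q + t • u = q + t • (u - q) := by module
      rwa [this] at h
    have h1 := hmin _ hmem
    have h1sq : ‖x - q‖ ^ 2 ≤ ‖x - (q + t • (u - q))‖ ^ 2 :=
      pow_le_pow_left₀ (norm_nonneg _) h1 2
    have h2 : x - (q + t • (u - q)) = (x - q) - t • (u - q) := by abel
    have hexp : ‖(x - q) - t • (u - q)‖ ^ 2 =
        ‖x - q‖ ^ 2 - 2 * (t * ⟪x - q, u - q⟫) + t ^ 2 * ‖u - q‖ ^ 2 := by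
      rw [norm_sub_sq_real, real_inner_smul_right, norm_smul, Real.norm_eq_abs, abs_of_pos ht]
      ring
    rw [h2, hexp] at h1sq
    have h3 : 2 * t * ⟪x - q, u - q⟫ ≤ t ^ 2 * ‖u - q‖ ^ 2 := by nlinarith
    nlinarith
  by_contra h
  push_neg at h
  rcases eq_or_ne (‖u - q‖) 0 with h0 | h0
  · have := key 1 one_pos le_rfl
    rw [h0] at this
    nlinarith
  · have hnq : 0 < ‖u - q‖ ^ 2 := by positivity
    set c := ⟪x - q, u - q⟫ with hc
    set t := min 1 (c / ‖u - q‖ ^ 2) with htdef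
    have htpos : 0 < t := lt_min one_pos (by positivity)
    have ht1 : t ≤ 1 := min_le_left _ _
    have := key t htpos ht1
    have h3 : t * ‖u - q‖ ^ 2 ≤ c := by
      calc t * ‖u - q‖ ^ 2 ≤ (c / ‖u - q‖ ^ 2) * ‖u - q‖ ^ 2 := by
            apply mul_le_mul_of_nonneg_right (min_le_right _ _) hnq.le
        _ = c := by field_simp
    linarith

/-- The nearest-point map does not increase distance to points of `K`. -/
lemma proj_nonexp (K : Set (EuclideanSpace ℝ (Fin n))) (hK : Convex ℝ K)
    (x q : EuclideanSpace ℝ (Fin n)) (hq : q ∈ K)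
    (hmin : ∀ y ∈ K, ‖x - q‖ ≤ ‖x - y‖) (u : EuclideanSpace ℝ (Fin n)) (hu : u ∈ K) :
    ‖q - u‖ ≤ ‖x - u‖ := by
  have h := proj_inner_le K hK x q hq hmin u hu
  have hxu : x - u = (x - q) + (q - u) := by abel
  have expand : ‖x - u‖ ^ 2 = ‖x - q‖ ^ 2 + 2 * ⟪x - q, q - u⟫ + ‖q - u‖ ^ 2 := by
    rw [hxu, norm_add_sq_real]
  have hneg : ⟪x - q, q - u⟫ = - ⟪x - q, u - q⟫ := by
    rw [← inner_neg_right]; congr 1; abel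
  have hsq : ‖q - u‖ ^ 2 ≤ ‖x - u‖ ^ 2 := by
    rw [expand, hneg]; nlinarith [sq_nonneg ‖x - q‖]
  have := Real.sqrt_le_sqrt hsq
  rwa [Real.sqrt_sq (norm_nonneg _), Real.sqrt_sq (norm_nonneg _)] at this

/-- A nonnegative sequence satisfying `a (k+1) ≤ a k + c k` with `c` summable converges. -/
lemma tendsto_of_le_add_summable {a c : ℕ → ℝ} (ha0 : ∀ k, 0 ≤ a k)
    (hc : Summable c) (hc0 : ∀ k, 0 ≤ c k) (h : ∀ k, a (k + 1) ≤ a k + c k) :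
    ∃ L, Tendsto a atTop (𝓝 L) := by
  set T : ℕ → ℝ := fun k => ∑' j, c (j + k) with hT
  have hTsum : ∀ k, Summable fun j => c (j + k) := fun k => (summable_nat_add_iff k).2 hc
  have hTrec : ∀ k, T k = c k + T (k + 1) := by
    intro k
    have := Summable.tsum_eq_zero_add (hTsum k)
    simpa [hT, add_assoc, add_comm, add_left_comm] using this
  have hT0 : ∀ k, 0 ≤ T k := fun k => tsum_nonneg fun j => hc0 _
  set b : ℕ → ℝ := fun k => a k + T k with hb
  have hbanti : Antitone b := by
    apply antitone_nat_of_succ_le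
    intro k
    have := h k
    have := hTrec k
    simp only [hb]
    linarith [h k, hTrec k]
  have hbbdd : BddBelow (Set.range b) := by
    refine ⟨0, ?_⟩
    rintro r ⟨k, rfl⟩
    exact add_nonneg (ha0 k) (hT0 k)
  have hbt : Tendsto b atTop (𝓝 (⨅ i, b i)) := tendsto_atTop_ciInf hbanti hbbdd
  have hTt : Tendsto T atTop (𝓝 0) := tendsto_sum_nat_add c
  refine ⟨(⨅ i, b i) - 0, ?_⟩
  have : Tendsto (fun k => b k - T k) atTop (𝓝 ((⨅ i, b i) - 0)) := hbt.sub hTt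
  convert this using 2 with k
  simp [hb]

end aux

/-- The solution set of the variational inequality problem VIP(F, C). -/
def SOL {n : ℕ} (F : EuclideanSpace ℝ (Fin n) → EuclideanSpace ℝ (Fin n))
    (C : Set (EuclideanSpace ℝ (Fin n))) : Set (EuclideanSpace ℝ (Fin n)) :=
  {x | x ∈ C ∧ ∀ y ∈ C, 0 ≤ ⟪F x, y - x⟫}

set_option maxHeartbeats 1000000 in
theorem stmt_0 {n : ℕ} (hn : 0 < n)
    (C : Set (EuclideanSpace ℝ (Fin n)))
    (hCne : C.Nonempty) (hCcl : IsClosed C) (hCcv : Convex ℝ C)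
    (F : EuclideanSpace ℝ (Fin n) → EuclideanSpace ℝ (Fin n))
    (hFcont : Continuous F)
    (hFmono : ∀ x y, 0 ≤ ⟪F x - F y, x - y⟫)
    (hFpara : ∀ x ∈ C, ∀ y ∈ C, ⟪F x - F y, x - y⟫ = 0 → F x = F y)
    (hSOLne : (SOL F C).Nonempty)
    (hcoer : ∃ zhat ∈ C, ∃ W : Set (EuclideanSpace ℝ (Fin n)),
      Bornology.IsBounded W ∧ ∀ x ∉ W, 0 ≤ ⟪F x, x - zhat⟫)
    (β : ℕ → ℝ) (hβpos : ∀ k, 0 < β k)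
    (hβdiv : Tendsto (fun N => ∑ k ∈ Finset.range N, β k) atTop atTop)
    (hβsq : Summable fun k => (β k) ^ 2)
    (K : ℕ → Set (EuclideanSpace ℝ (Fin n)))
    (hKne : ∀ k, (K k).Nonempty) (hKcl : ∀ k, IsClosed (K k))
    (hKcv : ∀ k, Convex ℝ (K k)) (hCK : ∀ k, C ⊆ K k)
    -- `P k` is the metric projection onto `K k`: `P k x` is the point of `K k` nearest to `x`.
    (P : ℕ → EuclideanSpace ℝ (Fin n) → EuclideanSpace ℝ (Fin n))
    (hP : ∀ k x, P k x ∈ K k ∧ ∀ y ∈ K k, ‖x - P k x‖ ≤ ‖x - y‖)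
    (hcontr : ∀ V : Set (EuclideanSpace ℝ (Fin n)), Bornology.IsBounded V →
      ∃ μ : ℝ, 0 ≤ μ ∧ μ < 1 ∧ ∀ k, ∀ x ∈ V, infDist (P k x) C ≤ μ * infDist x C)
    (x : ℕ → EuclideanSpace ℝ (Fin n))
    (hx : ∀ k, x (k + 1) = P k (x k - (β k / max 1 ‖F (x k)‖) • F (x k))) :
    Bornology.IsBounded (Set.range x) ∧
      ∀ p : EuclideanSpace ℝ (Fin n),
        (∃ φ : ℕ → ℕ, StrictMono φ ∧ Tendsto (x ∘ φ) atTop (nhds p)) → p ∈ SOL F C := by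
  classical
  obtain ⟨zhat, hzhatC, W, hWbdd, hcoW⟩ := hcoer
  -- notation
  set η : ℕ → ℝ := fun k => max 1 ‖F (x k)‖ with hη
  set lam : ℕ → ℝ := fun k => β k / η k with hlam
  set y : ℕ → EuclideanSpace ℝ (Fin n) := fun k => x k - lam k • F (x k) with hy
  have hxy : ∀ k, x (k + 1) = P k (y k) := fun k => hx k
  have hη1 : ∀ k, 1 ≤ η k := fun k => le_max_left _ _
  have hηpos : ∀ k, 0 < η k := fun k => lt_of_lt_of_le one_pos (hη1 k)
  have hηF : ∀ k, ‖F (x k)‖ ≤ η k := fun k => le_max_right _ _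
  have hlampos : ∀ k, 0 < lam k := fun k => div_pos (hβpos k) (hηpos k)
  have hlamβ : ∀ k, lam k ≤ β k := by
    intro k
    rw [hlam]
    exact div_le_self (hβpos k).le (hη1 k)
  have hlamF : ∀ k, lam k * ‖F (x k)‖ ≤ β k := by
    intro k
    rw [hlam, div_mul_eq_mul_div, div_le_iff₀ (hηpos k)]
    exact mul_le_mul_of_nonneg_left (hηF k) (hβpos k).le
  have hyx : ∀ k, ‖y k - x k‖ ≤ β k := by
    intro k
    have : y k - x k = -(lam k • F (x k)) := by
      show x k - lam k • F (x k) - x k = -(lam k • F (x k)); abel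
    rw [this, norm_neg, norm_smul, Real.norm_eq_abs, abs_of_pos (hlampos k)]
    exact hlamF k
  -- sums of β²
  set Sβ : ℝ := ∑' k, β k ^ 2 with hSβ
  have hSβ0 : 0 ≤ Sβ := tsum_nonneg fun k => sq_nonneg _
  have hβsq_le : ∀ k, β k ^ 2 ≤ Sβ := fun k =>
    Summable.le_tsum hβsq k fun j _ => sq_nonneg _
  set B : ℝ := max 1 (Real.sqrt Sβ) with hB
  have hBpos : 0 < B := lt_of_lt_of_le one_pos (le_max_left _ _)
  have hβB : ∀ k, β k ≤ B := by
    intro k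
    have h1 : β k = Real.sqrt (β k ^ 2) := (Real.sqrt_sq (hβpos k).le).symm
    rw [h1]
    exact le_trans (Real.sqrt_le_sqrt (hβsq_le k)) (le_max_right _ _)
  -- key per-step inequality for any u ∈ C
  have keyineq : ∀ k, ∀ u ∈ C,
      ‖x (k + 1) - u‖ ^ 2 ≤ ‖x k - u‖ ^ 2 - 2 * lam k * ⟪F (x k), x k - u⟫ + β k ^ 2 := by
    intro k u huC
    have hne : ‖x (k + 1) - u‖ ≤ ‖y k - u‖ := by
      rw [hxy k]
      exact proj_nonexp (K k) (hKcv k) (y k) (P k (y k)) (hP k (y k)).1 (hP k (y k)).2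
        u (hCK k huC)
    have hsq : ‖x (k + 1) - u‖ ^ 2 ≤ ‖y k - u‖ ^ 2 :=
      pow_le_pow_left₀ (norm_nonneg _) hne 2
    have hyexp : y k - u = (x k - u) - lam k • F (x k) := by
      show x k - lam k • F (x k) - u = (x k - u) - lam k • F (x k); abel
    have hexp : ‖y k - u‖ ^ 2 =
        ‖x k - u‖ ^ 2 - 2 * lam k * ⟪F (x k), x k - u⟫ + (lam k) ^ 2 * ‖F (x k)‖ ^ 2 := by
      rw [hyexp, norm_sub_sq_real, real_inner_smul_right, norm_smul, Real.norm_eq_abs,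
        abs_of_pos (hlampos k), real_inner_comm]
      ring
    have hlast : (lam k) ^ 2 * ‖F (x k)‖ ^ 2 ≤ β k ^ 2 := by
      have h1 : (lam k * ‖F (x k)‖) ^ 2 ≤ β k ^ 2 :=
        pow_le_pow_left₀ (mul_nonneg (hlampos k).le (norm_nonneg _)) (hlamF k) 2
      calc (lam k) ^ 2 * ‖F (x k)‖ ^ 2 = (lam k * ‖F (x k)‖) ^ 2 := by ring
        _ ≤ β k ^ 2 := h1
    calc ‖x (k + 1) - u‖ ^ 2 ≤ ‖y k - u‖ ^ 2 := hsq
      _ = ‖x k - u‖ ^ 2 - 2 * lam k * ⟪F (x k), x k - u⟫ + (lam k) ^ 2 * ‖F (x k)‖ ^ 2 := hexp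
      _ ≤ ‖x k - u‖ ^ 2 - 2 * lam k * ⟪F (x k), x k - u⟫ + β k ^ 2 := by linarith
  -- boundedness of the iterates
  obtain ⟨ρ, hρ⟩ := hWbdd.subset_closedBall zhat
  set A : ℝ := max (‖x 0 - zhat‖ ^ 2) ((ρ + B) ^ 2) with hA
  have hbound : ∀ k, ‖x k - zhat‖ ^ 2 ≤ A + Sβ := by
    have main : ∀ k, ‖x k - zhat‖ ^ 2 ≤ A + ∑ j ∈ Finset.range k, β j ^ 2 := by
      intro k
      induction k with
      | zero =>
        have h0 : ‖x 0 - zhat‖ ^ 2 ≤ A := by rw [hA]; exact le_max_left _ _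
        simpa using h0
      | succ k ih =>
        by_cases hW : x k ∈ W
        · have hxkρ : ‖x k - zhat‖ ≤ ρ := by
            have := hρ hW
            rwa [mem_closedBall, dist_eq_norm] at this
          have h1 : ‖x (k + 1) - zhat‖ ≤ ‖y k - zhat‖ := by
            rw [hxy k]
            exact proj_nonexp (K k) (hKcv k) (y k) (P k (y k)) (hP k (y k)).1 (hP k (y k)).2
              zhat (hCK k hzhatC)
          have h2 : ‖y k - zhat‖ ≤ ‖x k - zhat‖ + β k := by
            have : y k - zhat = (y k - x k) + (x k - zhat) := by abel
            rw [this]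
            calc ‖(y k - x k) + (x k - zhat)‖ ≤ ‖y k - x k‖ + ‖x k - zhat‖ := norm_add_le _ _
              _ ≤ ‖x k - zhat‖ + β k := by linarith [hyx k]
          have h3 : ‖x (k + 1) - zhat‖ ≤ ρ + B := by
            calc ‖x (k + 1) - zhat‖ ≤ ‖x k - zhat‖ + β k := le_trans h1 h2
              _ ≤ ρ + B := by linarith [hβB k]
          have h4 : ‖x (k + 1) - zhat‖ ^ 2 ≤ (ρ + B) ^ 2 :=
            pow_le_pow_left₀ (norm_nonneg _) h3 2
          have h5 : (ρ + B) ^ 2 ≤ A := le_max_right _ _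
          have h6 : (0:ℝ) ≤ ∑ j ∈ Finset.range (k + 1), β j ^ 2 :=
            Finset.sum_nonneg fun j _ => sq_nonneg _
          linarith
        · have hco := hcoW (x k) hW
          have h1 := keyineq k zhat hzhatC
          have h2 : ‖x (k + 1) - zhat‖ ^ 2 ≤ ‖x k - zhat‖ ^ 2 + β k ^ 2 := by
            nlinarith [mul_nonneg (hlampos k).le hco]
          rw [Finset.sum_range_succ]
          linarith
    intro k
    refine le_trans (main k) ?_
    have : ∑ j ∈ Finset.range k, β j ^ 2 ≤ Sβ :=
      Summable.sum_le_tsum _ (fun j _ => sq_nonneg _) hβsq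
    linarith
  set R : ℝ := Real.sqrt (A + Sβ) with hR
  have hxR : ∀ k, ‖x k - zhat‖ ≤ R := by
    intro k
    have := Real.sqrt_le_sqrt (hbound k)
    rwa [Real.sqrt_sq (norm_nonneg _)] at this
  have hxbdd : Bornology.IsBounded (Set.range x) := by
    apply (isBounded_closedBall (x := zhat) (r := R)).subset
    rintro p ⟨k, rfl⟩
    rw [mem_closedBall, dist_eq_norm]
    exact hxR k
  refine ⟨hxbdd, ?_⟩
  -- bound on η
  have hR0 : 0 ≤ R := Real.sqrt_nonneg _
  have hxball : ∀ k, x k ∈ closedBall zhat R := by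
    intro k; rw [mem_closedBall, dist_eq_norm]; exact hxR k
  obtain ⟨zmax, hzmax_mem, hzmax⟩ :=
    (isCompact_closedBall zhat R).exists_isMaxOn ⟨zhat, mem_closedBall_self hR0⟩
      (hFcont.norm.continuousOn)
  set ηbar : ℝ := max 1 ‖F zmax‖ with hηbar
  have hηbar1 : 1 ≤ ηbar := le_max_left _ _
  have hηbarpos : 0 < ηbar := lt_of_lt_of_le one_pos hηbar1
  have hηle : ∀ k, η k ≤ ηbar := by
    intro k
    apply max_le hηbar1
    exact le_trans (hzmax (hxball k)) (le_max_right _ _)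
  have hlamlow : ∀ k, β k / ηbar ≤ lam k := by
    intro k
    apply div_le_div_of_nonneg_left (hβpos k).le (hηpos k) (hηle k)
  -- the separating contraction
  have hyball : ∀ k, y k ∈ closedBall zhat (R + B) := by
    intro k
    rw [mem_closedBall, dist_eq_norm]
    have : y k - zhat = (y k - x k) + (x k - zhat) := by abel
    rw [this]
    calc ‖(y k - x k) + (x k - zhat)‖ ≤ ‖y k - x k‖ + ‖x k - zhat‖ := norm_add_le _ _
      _ ≤ R + B := by linarith [hyx k, hxR k, hβB k]
  obtain ⟨μ, hμ0, hμ1, hμ⟩ := hcontr (closedBall zhat (R + B)) isBounded_closedBall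
  set d : ℕ → ℝ := fun k => infDist (x k) C with hd
  have hd0 : ∀ k, 0 ≤ d k := fun k => infDist_nonneg
  have hdrec : ∀ k, d (k + 1) ≤ μ * (d k + β k) := by
    intro k
    have h1 : d (k + 1) ≤ μ * infDist (y k) C := by
      show infDist (x (k + 1)) C ≤ _
      rw [hxy k]
      exact hμ k (y k) (hyball k)
    have h2 : infDist (y k) C ≤ d k + β k := by
      calc infDist (y k) C ≤ infDist (x k) C + dist (y k) (x k) := infDist_le_infDist_add_dist
        _ ≤ d k + β k := by
            rw [dist_eq_norm]
            exact add_le_add le_rfl (hyx k)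
    calc d (k + 1) ≤ μ * infDist (y k) C := h1
      _ ≤ μ * (d k + β k) := mul_le_mul_of_nonneg_left h2 hμ0
  -- summability of d²
  set s : ℝ := (1 + μ) / 2 with hs
  have hs0 : 0 < s := by rw [hs]; linarith
  have hs1 : s < 1 := by rw [hs]; linarith
  set c1 : ℝ := μ ^ 2 / s with hc1
  set c2 : ℝ := μ ^ 2 / (1 - s) with hc2
  have hc1lt : c1 < 1 := by
    rw [hc1, div_lt_one hs0, hs]
    nlinarith
  have hc10 : 0 ≤ c1 := by positivity
  have hc20 : 0 ≤ c2 := by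
    rw [hc2]
    apply div_nonneg (sq_nonneg _)
    linarith
  have hdsqrec : ∀ k, d (k + 1) ^ 2 ≤ c1 * d k ^ 2 + c2 * β k ^ 2 := by
    intro k
    have h1 : d (k + 1) ^ 2 ≤ μ ^ 2 * (d k + β k) ^ 2 := by
      have := pow_le_pow_left₀ (hd0 (k + 1)) (hdrec k) 2
      calc d (k + 1) ^ 2 ≤ (μ * (d k + β k)) ^ 2 := this
        _ = μ ^ 2 * (d k + β k) ^ 2 := by ring
    have h2 : (d k + β k) ^ 2 ≤ d k ^ 2 / s + β k ^ 2 / (1 - s) := by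
      have key : 0 ≤ ((1 - s) * d k - s * β k) ^ 2 := sq_nonneg _
      have h1s : 0 < 1 - s := by linarith
      rw [div_add_div _ _ (ne_of_gt hs0) (ne_of_gt h1s), le_div_iff₀ (by positivity)]
      nlinarith
    have h3 : μ ^ 2 * (d k + β k) ^ 2 ≤ c1 * d k ^ 2 + c2 * β k ^ 2 := by
      rw [hc1, hc2]
      have := mul_le_mul_of_nonneg_left h2 (sq_nonneg μ)
      calc μ ^ 2 * (d k + β k) ^ 2 ≤ μ ^ 2 * (d k ^ 2 / s + β k ^ 2 / (1 - s)) := this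
        _ = μ ^ 2 / s * d k ^ 2 + μ ^ 2 / (1 - s) * β k ^ 2 := by ring
    linarith
  have hdsq_sum : Summable fun k => d k ^ 2 := by
    apply summable_of_sum_range_le (c := (d 0 ^ 2 + c2 * Sβ) / (1 - c1))
      (fun k => sq_nonneg _)
    intro N
    rw [le_div_iff₀ (by linarith)]
    have h1 : ∑ k ∈ Finset.range N, d (k + 1) ^ 2 ≤
        c1 * ∑ k ∈ Finset.range N, d k ^ 2 + c2 * Sβ := by
      calc ∑ k ∈ Finset.range N, d (k + 1) ^ 2
          ≤ ∑ k ∈ Finset.range N, (c1 * d k ^ 2 + c2 * β k ^ 2) :=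
            Finset.sum_le_sum fun k _ => hdsqrec k
        _ = c1 * ∑ k ∈ Finset.range N, d k ^ 2 + c2 * ∑ k ∈ Finset.range N, β k ^ 2 := by
            rw [Finset.sum_add_distrib, Finset.mul_sum, Finset.mul_sum]
        _ ≤ c1 * ∑ k ∈ Finset.range N, d k ^ 2 + c2 * Sβ := by
            have := Summable.sum_le_tsum (Finset.range N) (fun j _ => sq_nonneg (β j)) hβsq
            nlinarith
    have h2 : ∑ k ∈ Finset.range N, d k ^ 2 - d 0 ^ 2 ≤
        ∑ k ∈ Finset.range N, d (k + 1) ^ 2 := by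
      rcases Nat.eq_zero_or_pos N with rfl | hN
      · simp [sq_nonneg]
      · obtain ⟨M, rfl⟩ := Nat.exists_eq_add_of_lt hN
        simp only [zero_add]
        rw [Finset.sum_range_succ' (fun k => d k ^ 2) M]
        have : ∑ k ∈ Finset.range M, d (k + 1) ^ 2 ≤ ∑ k ∈ Finset.range (M + 1), d (k + 1) ^ 2 := by
          rw [Finset.sum_range_succ]
          nlinarith [sq_nonneg (d (M + 1))]
        linarith
    nlinarith
  have hdto0 : Tendsto d atTop (𝓝 0) := by
    have h1 : Tendsto (fun k => d k ^ 2) atTop (𝓝 0) := hdsq_sum.tendsto_atTop_zero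
    have h2 : Tendsto (fun k => Real.sqrt (d k ^ 2)) atTop (𝓝 (Real.sqrt 0)) :=
      (Real.continuous_sqrt.tendsto 0).comp h1
    rw [Real.sqrt_zero] at h2
    convert h2 using 2 with k
    rw [Real.sqrt_sq (hd0 k)]
  have hβd_sum : Summable fun k => β k * d k := by
    apply Summable.of_nonneg_of_le (fun k => mul_nonneg (hβpos k).le (hd0 k))
      (fun k => ?_) (hβsq.add hdsq_sum)
    nlinarith [sq_nonneg (β k - d k)]
  -- Fejér-type results for any solution
  have fejer : ∀ xs ∈ SOL F C,
      (∃ L, Tendsto (fun k => ‖x k - xs‖ ^ 2) atTop (𝓝 L)) ∧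
      Summable fun k => lam k * (⟪F (x k), x k - xs⟫ + ‖F xs‖ * d k) := by
    intro xs hxs
    obtain ⟨hxsC, hxsSOL⟩ := hxs
    set u : ℕ → ℝ := fun k => ⟪F (x k), x k - xs⟫ with hu
    have hulow : ∀ k, -(‖F xs‖ * d k) ≤ u k := by
      intro k
      obtain ⟨z, hzC, hz⟩ := hCcl.exists_infDist_eq_dist hCne (x k)
      have h1 : ⟪F xs, x k - xs⟫ ≤ u k := by
        have := hFmono (x k) xs
        rw [inner_sub_left] at this
        simp only [hu]
        linarith
      have h2 : ⟪F xs, x k - xs⟫ = ⟪F xs, x k - z⟫ + ⟪F xs, z - xs⟫ := by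
        rw [← inner_add_right]
        congr 1
        abel
      have h3 : 0 ≤ ⟪F xs, z - xs⟫ := hxsSOL z hzC
      have h4 : -(‖F xs‖ * ‖x k - z‖) ≤ ⟪F xs, x k - z⟫ :=
        neg_le_of_neg_le (by
          have := abs_real_inner_le_norm (F xs) (x k - z)
          have h := neg_abs_le (⟪F xs, x k - z⟫)
          nlinarith [abs_nonneg (⟪F xs, x k - z⟫)])
      have h5 : ‖x k - z‖ = d k := by
        rw [show d k = infDist (x k) C from rfl, hz, dist_eq_norm]
      rw [h5] at h4
      linarith
    set cc : ℕ → ℝ := fun k => 2 * β k * ‖F xs‖ * d k + β k ^ 2 with hcc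
    have hcc0 : ∀ k, 0 ≤ cc k := by
      intro k
      have h1 : (0:ℝ) ≤ 2 * β k * ‖F xs‖ * d k :=
        mul_nonneg (mul_nonneg (mul_nonneg (by norm_num : (0:ℝ) ≤ 2) (hβpos k).le)
          (norm_nonneg (F xs))) (hd0 k)
      simp only [hcc]
      nlinarith [sq_nonneg (β k)]
    have hccsum : Summable cc := by
      have h1 : Summable fun k => (2 * ‖F xs‖) * (β k * d k) := hβd_sum.mul_left _
      have h2 : Summable fun k => (2 * ‖F xs‖) * (β k * d k) + β k ^ 2 := h1.add hβsq
      convert h2 using 2 with k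
      simp only [hcc]
      ring
    have hstep : ∀ k, ‖x (k + 1) - xs‖ ^ 2 ≤ ‖x k - xs‖ ^ 2 - 2 * lam k * u k + β k ^ 2 :=
      fun k => keyineq k xs hxsC
    have hlamd : ∀ k, 2 * lam k * (‖F xs‖ * d k) ≤ 2 * β k * ‖F xs‖ * d k := by
      intro k
      have h1 : lam k ≤ β k := hlamβ k
      have h2 : 0 ≤ ‖F xs‖ * d k := mul_nonneg (norm_nonneg _) (hd0 k)
      nlinarith
    have hfej : ∀ k, ‖x (k + 1) - xs‖ ^ 2 ≤ ‖x k - xs‖ ^ 2 + cc k := by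
      intro k
      have h1 := hstep k
      have h2 : -(2 * lam k * u k) ≤ 2 * lam k * (‖F xs‖ * d k) := by
        have := hulow k
        nlinarith [(hlampos k).le]
      have h3 := hlamd k
      simp only [hcc]
      linarith
    constructor
    · exact tendsto_of_le_add_summable (fun k => sq_nonneg _) hccsum hcc0 hfej
    · -- summability of lam k * (u k + ‖F xs‖ d k)
      set g : ℕ → ℝ := fun k => lam k * (u k + ‖F xs‖ * d k) with hg
      have hg0 : ∀ k, 0 ≤ g k := by
        intro k
        apply mul_nonneg (hlampos k).le
        have := hulow k
        linarith
      apply summable_of_sum_range_le (c := (‖x 0 - xs‖ ^ 2 + ∑' k, cc k) / 2) hg0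
      intro N
      have hteles : ∑ k ∈ Finset.range N, (‖x k - xs‖ ^ 2 - ‖x (k + 1) - xs‖ ^ 2) =
          ‖x 0 - xs‖ ^ 2 - ‖x N - xs‖ ^ 2 :=
        Finset.sum_range_sub' (fun k => ‖x k - xs‖ ^ 2) N
      have hbd : ∀ k, 2 * g k ≤ (‖x k - xs‖ ^ 2 - ‖x (k + 1) - xs‖ ^ 2) + cc k := by
        intro k
        have h1 := hstep k
        have h3 := hlamd k
        simp only [hg, hcc]
        nlinarith [(hlampos k).le, hulow k]
      have h4 : ∑ k ∈ Finset.range N, 2 * g k ≤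
          (‖x 0 - xs‖ ^ 2 - ‖x N - xs‖ ^ 2) + ∑ k ∈ Finset.range N, cc k := by
        calc ∑ k ∈ Finset.range N, 2 * g k
            ≤ ∑ k ∈ Finset.range N, ((‖x k - xs‖ ^ 2 - ‖x (k + 1) - xs‖ ^ 2) + cc k) :=
              Finset.sum_le_sum fun k _ => hbd k
          _ = (‖x 0 - xs‖ ^ 2 - ‖x N - xs‖ ^ 2) + ∑ k ∈ Finset.range N, cc k := by
              rw [Finset.sum_add_distrib, hteles]
      have h5 : ∑ k ∈ Finset.range N, cc k ≤ ∑' k, cc k :=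
        Summable.sum_le_tsum _ (fun j _ => hcc0 j) hccsum
      have h6 : ∑ k ∈ Finset.range N, 2 * g k = 2 * ∑ k ∈ Finset.range N, g k := by
        rw [Finset.mul_sum]
      rw [le_div_iff₀ (by norm_num : (0:ℝ) < 2)]
      nlinarith [sq_nonneg ‖x N - xs‖]
  -- pick a solution and find a cluster point that solves VIP
  obtain ⟨xs, hxsSOL⟩ := hSOLne
  obtain ⟨-, hgsum⟩ := fejer xs hxsSOL
  set sfun : ℕ → ℝ := fun k => ⟪F (x k), x k - xs⟫ + ‖F xs‖ * d k with hsfun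
  have hsfun0 : ∀ k, 0 ≤ sfun k := by
    intro k
    obtain ⟨hxsC, hxsVI⟩ := hxsSOL
    obtain ⟨z, hzC, hz⟩ := hCcl.exists_infDist_eq_dist hCne (x k)
    have h1 : ⟪F xs, x k - xs⟫ ≤ ⟪F (x k), x k - xs⟫ := by
      have := hFmono (x k) xs
      rw [inner_sub_left] at this
      linarith
    have h2 : ⟪F xs, x k - xs⟫ = ⟪F xs, x k - z⟫ + ⟪F xs, z - xs⟫ := by
      rw [← inner_add_right]; congr 1; abel
    have h3 : 0 ≤ ⟪F xs, z - xs⟫ := hxsVI z hzC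
    have h4 : -(‖F xs‖ * ‖x k - z‖) ≤ ⟪F xs, x k - z⟫ := by
      have := abs_real_inner_le_norm (F xs) (x k - z)
      have h := neg_abs_le (⟪F xs, x k - z⟫)
      nlinarith [abs_nonneg (⟪F xs, x k - z⟫)]
    have h5 : ‖x k - z‖ = d k := by
      rw [show d k = infDist (x k) C from rfl, hz, dist_eq_norm]
    simp only [hsfun]
    rw [h5] at h4
    linarith
  -- frequently small
  have hfreq : ∀ ε : ℝ, 0 < ε → ∃ᶠ k in atTop, sfun k < ε := by
    intro ε hε
    by_contra hcon
    rw [Filter.not_frequently] at hcon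
    rw [Filter.eventually_atTop] at hcon
    obtain ⟨N, hN⟩ := hcon
    have hNlow : ∀ k ≥ N, ε ≤ sfun k := by
      intro k hk
      have := hN k hk
      push_neg at this
      exact this
    -- then β is summable, contradiction
    have hβsummable : Summable β := by
      rw [← summable_nat_add_iff N]
      apply Summable.of_nonneg_of_le (fun k => (hβpos _).le)
        (f := fun k => (ηbar / ε) * (lam (k + N) * sfun (k + N)))
      · intro k
        have hs := hNlow (k + N) (Nat.le_add_left _ _)
        have hl := hlamlow (k + N)
        have h1 : β (k + N) / ηbar * ε ≤ lam (k + N) * sfun (k + N) := by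
          apply mul_le_mul hl hs hε.le (hlampos _).le
        rw [← mul_le_mul_iff_right₀ (show (0:ℝ) < ε / ηbar by positivity)]
        calc ε / ηbar * β (k + N) = β (k + N) / ηbar * ε := by ring
          _ ≤ lam (k + N) * sfun (k + N) := h1
          _ = ε / ηbar * ((ηbar / ε) * (lam (k + N) * sfun (k + N))) := by
              field_simp
      · have h := (summable_nat_add_iff N).mpr hgsum
        exact h.mul_left _
    have := hβsummable.hasSum.tendsto_sum_nat
    exact not_tendsto_atTop_of_tendsto_nhds this hβdiv
  -- extract subsequence with sfun → 0
  have hext : ∃ φ : ℕ → ℕ, StrictMono φ ∧ ∀ j, sfun (φ j) < 1 / (j + 1) := by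
    apply Filter.extraction_forall_of_frequently (P := fun j k => sfun k < 1 / (j + 1))
    intro j
    exact hfreq (1 / (j + 1)) (by positivity)
  obtain ⟨φ, hφmono, hφ⟩ := hext
  have hsφ0 : Tendsto (fun j => sfun (φ j)) atTop (𝓝 0) := by
    apply tendsto_of_tendsto_of_tendsto_of_le_of_le tendsto_const_nhds
      tendsto_one_div_add_atTop_nhds_zero_nat (fun j => hsfun0 _) (fun j => (hφ j).le)
  -- extract convergent sub-subsequence
  obtain ⟨p, -, ψ, hψmono, hψlim⟩ :=
    tendsto_subseq_of_bounded hxbdd (x := fun j => x (φ j)) (fun j => Set.mem_range_self _)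
  have hcomp : ∀ j, (fun j => x (φ j)) (ψ j) = x (φ (ψ j)) := fun j => rfl
  set θ : ℕ → ℕ := fun j => φ (ψ j) with hθ
  have hθmono : StrictMono θ := hφmono.comp hψmono
  have hxθ : Tendsto (fun j => x (θ j)) atTop (𝓝 p) := hψlim
  have hsθ0 : Tendsto (fun j => sfun (θ j)) atTop (𝓝 0) :=
    hsφ0.comp hψmono.tendsto_atTop
  have hdθ0 : Tendsto (fun j => d (θ j)) atTop (𝓝 0) :=
    hdto0.comp hθmono.tendsto_atTop
  -- p ∈ C
  have hpC : p ∈ C := by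
    have h1 : Tendsto (fun j => infDist (x (θ j)) C) atTop (𝓝 (infDist p C)) :=
      ((continuous_infDist_pt C).tendsto p).comp hxθ
    have h2 : infDist p C = 0 := tendsto_nhds_unique h1 hdθ0
    exact (hCcl.mem_iff_infDist_zero hCne).2 h2
  -- inner product limit
  have hinner : ⟪F p, p - xs⟫ = 0 := by
    have hcont : Continuous fun q : EuclideanSpace ℝ (Fin n) => ⟪F q, q - xs⟫ :=
      (hFcont.inner (continuous_id.sub continuous_const))
    have h1 : Tendsto (fun j => ⟪F (x (θ j)), x (θ j) - xs⟫) atTop (𝓝 (⟪F p, p - xs⟫)) :=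
      (hcont.tendsto p).comp hxθ
    have h2 : Tendsto (fun j => ⟪F (x (θ j)), x (θ j) - xs⟫) atTop (𝓝 0) := by
      have : ∀ j, ⟪F (x (θ j)), x (θ j) - xs⟫ = sfun (θ j) - ‖F xs‖ * d (θ j) := by
        intro j; simp only [hsfun]; ring
      simp only [this]
      have := hsθ0.sub (hdθ0.const_mul ‖F xs‖)
      simpa using this
    exact tendsto_nhds_unique h1 h2
  -- p ∈ SOL
  have hpSOL : p ∈ SOL F C := by
    obtain ⟨hxsC, hxsVI⟩ := hxsSOL
    have hmono := hFmono p xs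
    have hps : 0 ≤ ⟪F xs, p - xs⟫ := hxsVI p hpC
    have hzero : ⟪F p - F xs, p - xs⟫ = 0 := by
      rw [inner_sub_left]
      rw [inner_sub_left] at hmono
      linarith
    have hFeq : F p = F xs := hFpara p hpC xs hxsC hzero
    have hps0 : ⟪F xs, p - xs⟫ = 0 := by
      have h := hzero
      rw [inner_sub_left] at h
      linarith [hinner]
    refine ⟨hpC, fun w hwC => ?_⟩
    have h1 : ⟪F p, w - p⟫ = ⟪F xs, w - xs⟫ - ⟪F xs, p - xs⟫ := by
      rw [hFeq, ← inner_sub_right]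
      congr 1
      abel
    rw [h1, hps0, sub_zero]
    exact hxsVI w hwC
  -- whole sequence converges to p
  obtain ⟨L, hL⟩ := (fejer p hpSOL).1
  have hLθ : Tendsto (fun j => ‖x (θ j) - p‖ ^ 2) atTop (𝓝 L) :=
    hL.comp hθmono.tendsto_atTop
  have hLθ0 : Tendsto (fun j => ‖x (θ j) - p‖ ^ 2) atTop (𝓝 0) := by
    have h1 : Tendsto (fun j => x (θ j) - p) atTop (𝓝 (p - p)) :=
      hxθ.sub tendsto_const_nhds
    rw [sub_self] at h1
    have h2 : Tendsto (fun j => ‖x (θ j) - p‖ ^ 2) atTop (𝓝 (‖(0 : EuclideanSpace ℝ (Fin n))‖ ^ 2)) :=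
      ((continuous_norm.pow 2).tendsto _).comp h1
    simpa using h2
  have hL0 : L = 0 := tendsto_nhds_unique hLθ hLθ0
  rw [hL0] at hL
  have hxp : Tendsto x atTop (𝓝 p) := by
    rw [tendsto_iff_dist_tendsto_zero]
    have h1 : Tendsto (fun k => Real.sqrt (‖x k - p‖ ^ 2)) atTop (𝓝 (Real.sqrt 0)) :=
      (Real.continuous_sqrt.tendsto 0).comp hL
    rw [Real.sqrt_zero] at h1
    convert h1 using 2 with k
    rw [Real.sqrt_sq (norm_nonneg _), dist_eq_norm]
  -- conclude: every cluster point equals p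
  rintro q ⟨φ', hφ'mono, hφ'lim⟩
  have h1 : Tendsto (x ∘ φ') atTop (𝓝 p) := hxp.comp hφ'mono.tendsto_atTop
  have : q = p := tendsto_nhds_unique hφ'lim h1
  rw [this]
  exact hpSOL
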